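/- arXiv:0905.0298 — 2 statements merged into one kernel-verified Lean document; each statement's English description precedes it below -/
import Mathlib

section
/- Let P be a finite set of complex numbers with |P| ≥ 2, let I := |Iso⁺(P)|, and let B and C be finite nonempty sets of complex numbers such that the Minkowski sum B + C := {b + c : b ∈ B, c ∈ C} has exactly |B|·|C| points. Then I·S_P(B + C) + |B|·|C| ≥ (I·S_P(B) + |B|)·(I·S_P(C) + |C|). -/
open MeasureTheory

noncomputable section

/-- `Q` is a similar copy of `P`: the image of `P` under an
orientation-preserving similarity `p ↦ z·p + w`, `z ≠ 0`. -/
def SimilarC (P Q : Finset ℂ) : Prop :=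
  ∃ z w : ℂ, z ≠ 0 ∧ (Q : Set ℂ) = (fun p => z * p + w) '' (P : Set ℂ)

/-- `SP P Q` is the number of subsets of `Q` that are similar copies of `P`. -/
def SP (P Q : Finset ℂ) : ℕ :=
  letI := Classical.decPred (SimilarC P)
  (Q.powerset.filter (SimilarC P)).card

/-- `Q` has no `m` points on a line: every collinear subset has at most `m - 1` points. -/
def NoMOnLine (m : ℕ) (Q : Finset ℂ) : Prop :=
  ∀ S ⊆ Q, Collinear ℝ (S : Set ℂ) → S.card ≤ m - 1

/-- `Q` has `m` points on a line. -/
def HasMOnLine (m : ℕ) (Q : Finset ℂ) : Prop :=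
  ∃ S ⊆ Q, S.card = m ∧ Collinear ℝ (S : Set ℂ)

/-- The number of orientation-preserving isometries of `ℂ` mapping `P` onto itself,
i.e. maps `p ↦ u·p + w` with `|u| = 1` fixing `P` setwise. -/
def IsoPlusCard (P : Finset ℂ) : ℕ :=
  {uw : ℂ × ℂ | ‖uw.1‖ = 1 ∧
    (fun p => uw.1 * p + uw.2) '' (P : Set ℂ) = (P : Set ℂ)}.ncard

/-- The index of `A` with respect to the pattern `P`. -/
def indexP (P A : Finset ℂ) : ℝ :=
  Real.log ((IsoPlusCard P : ℝ) * SP P A + A.card) / Real.log A.card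

/-- `SPnm P n m` : the maximum of `SP P Q` over `n`-point sets `Q`
with no `m` points on a line. -/
def SPnm (P : Finset ℂ) (n m : ℕ) : ℕ :=
  sSup {k | ∃ Q : Finset ℂ, Q.card = n ∧ NoMOnLine m Q ∧ SP P Q = k}

/-- `SPn P n` : the maximum of `SP P Q` over all `n`-point sets `Q`. -/
def SPn (P : Finset ℂ) (n : ℕ) : ℕ :=
  sSup {k | ∃ Q : Finset ℂ, Q.card = n ∧ SP P Q = k}

/-- The Minkowski sum `B + C` of two finite sets of complex numbers. -/
def minkSum (B C : Finset ℂ) : Finset ℂ :=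
  letI := Classical.decEq ℂ
  Finset.image₂ (· + ·) B C

/-- `Q` contains four pairwise distinct points forming a parallelogram. -/
def HasParallelogram (Q : Finset ℂ) : Prop :=
  ∃ p₁ ∈ Q, ∃ p₂ ∈ Q, ∃ p₃ ∈ Q, ∃ p₄ ∈ Q,
    p₁ ≠ p₂ ∧ p₁ ≠ p₃ ∧ p₁ ≠ p₄ ∧ p₂ ≠ p₃ ∧ p₂ ≠ p₄ ∧ p₃ ≠ p₄ ∧
    p₂ - p₁ = p₄ - p₃

/-- `Q` is parallelogram-free: no 3 collinear points and no parallelogram. -/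
def ParallelogramFree (Q : Finset ℂ) : Prop :=
  (∀ S ⊆ Q, Collinear ℝ (S : Set ℂ) → S.card ≤ 2) ∧ ¬ HasParallelogram Q

/-- The set `Q(P, A, u, v) = ⋃_{p ∈ P} (u·p + (v·p − p + 1)·A)`. -/
def Qset (P A : Finset ℂ) (u v : ℂ) : Finset ℂ :=
  letI := Classical.decEq ℂ
  P.biUnion fun p => A.image fun a => u * p + (v * p - p + 1) * a

/-- The vertex set of the regular `k`-gon. -/
def Rpoly (k : ℕ) : Finset ℂ :=
  letI := Classical.decEq ℂ
  (Finset.range k).image fun j : ℕ => Complex.exp (2 * Real.pi * Complex.I * (j : ℂ) / (k : ℂ))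

/-- `ω = e^{2πi/3}`. -/
def omega3 : ℂ := Complex.exp (2 * Real.pi * Complex.I / 3)

/-- The vertex set `{1, ω, ω²}` of an equilateral triangle. -/
def triEq : Finset ℂ :=
  letI := Classical.decEq ℂ
  {1, omega3, omega3 ^ 2}


/-- The set of affine maps (including constants) sending `P` into `Q`. -/
def Mset (P Q : Finset ℂ) : Set (ℂ × ℂ) :=
  {zw | ∀ p ∈ P, zw.1 * p + zw.2 ∈ Q}

lemma affine_eq {p₁ p₂ a b c d : ℂ} (hne : p₁ ≠ p₂)
    (h1 : a * p₁ + b = c * p₁ + d) (h2 : a * p₂ + b = c * p₂ + d) :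
    a = c ∧ b = d := by
  have hac : a = c := by
    have h3 : (a - c) * (p₁ - p₂) = 0 := by linear_combination h1 - h2
    rcases mul_eq_zero.mp h3 with h | h
    · exact sub_eq_zero.mp h
    · exact absurd (sub_eq_zero.mp h) hne
  refine ⟨hac, ?_⟩
  rw [hac] at h1
  exact add_left_cancel h1

lemma mset_finite {P : Finset ℂ} (Q : Finset ℂ) (hP : 2 ≤ P.card) :
    (Mset P Q).Finite := by
  obtain ⟨p₁, hp₁, p₂, hp₂, hne⟩ := Finset.one_lt_card.mp hP
  apply Set.Finite.of_finite_image (f := fun zw : ℂ × ℂ => (zw.1 * p₁ + zw.2, zw.1 * p₂ + zw.2))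
  · apply Set.Finite.subset ((Q ×ˢ Q : Finset (ℂ × ℂ)) : Set (ℂ × ℂ)).toFinite
    rintro ⟨x, y⟩ ⟨⟨z, w⟩, hzw, heq⟩
    simp only [Prod.mk.injEq] at heq
    simp only [Finset.coe_product, Set.mem_prod]
    exact ⟨heq.1 ▸ hzw p₁ hp₁, heq.2 ▸ hzw p₂ hp₂⟩
  · rintro ⟨z, w⟩ _ ⟨z', w'⟩ _ heq
    simp only [Prod.mk.injEq] at heq
    obtain ⟨h1, h2⟩ := affine_eq hne heq.1 heq.2
    simp [h1, h2]

lemma abs_eq_one_of_maps {P : Finset ℂ} (hP : 2 ≤ P.card) {u v : ℂ} (hu : u ≠ 0)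
    (h : (fun p => u * p + v) '' (P : Set ℂ) = (P : Set ℂ)) : ‖u‖ = 1 := by
  obtain ⟨p₁, hp₁, p₂, hp₂, hne⟩ := Finset.one_lt_card.mp hP
  have hprodne : (P ×ˢ P).Nonempty := ⟨(p₁, p₂), Finset.mk_mem_product hp₁ hp₂⟩
  set m := (P ×ˢ P).sup' hprodne (fun pq => ‖pq.1 - pq.2‖) with hm
  have hm_pos : 0 < m := by
    have h1 : 0 < ‖p₁ - p₂‖ := by
      simpa using sub_ne_zero.mpr hne
    exact lt_of_lt_of_le h1 (Finset.le_sup' (fun pq : ℂ × ℂ => ‖pq.1 - pq.2‖)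
      (Finset.mk_mem_product hp₁ hp₂))
  obtain ⟨⟨q₁, q₂⟩, hq, hqm⟩ := Finset.exists_mem_eq_sup' hprodne
      (fun pq : ℂ × ℂ => ‖pq.1 - pq.2‖)
  rw [Finset.mem_product] at hq
  rw [← hm] at hqm
  -- |u| ≤ 1 : the images of q₁, q₂ are in P
  have himg : ∀ q ∈ P, u * q + v ∈ P := by
    intro q hq'
    have : u * q + v ∈ (fun p => u * p + v) '' (P : Set ℂ) := ⟨q, hq', rfl⟩
    rw [h] at this; exact this
  have hle1 : ‖u‖ * m ≤ m := by
    have : ‖(u * q₁ + v) - (u * q₂ + v)‖ ≤ m :=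
      Finset.le_sup' (fun pq : ℂ × ℂ => ‖pq.1 - pq.2‖)
        (Finset.mk_mem_product (himg _ hq.1) (himg _ hq.2))
    calc ‖u‖ * m = ‖(u * q₁ + v) - (u * q₂ + v)‖ := by
          rw [hqm]; rw [← norm_mul]; congr 1; ring
      _ ≤ m := this
  -- 1 ≤ |u| : q₁, q₂ are images
  have hge1 : m ≤ ‖u‖ * m := by
    have hq1 : (q₁ : ℂ) ∈ (fun p => u * p + v) '' (P : Set ℂ) := by
      rw [h]; simpa using hq.1
    have hq2 : (q₂ : ℂ) ∈ (fun p => u * p + v) '' (P : Set ℂ) := by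
      rw [h]; simpa using hq.2
    obtain ⟨a, ha, hae⟩ := hq1
    obtain ⟨b, hb, hbe⟩ := hq2
    have hab : ‖a - b‖ ≤ m :=
      Finset.le_sup' (fun pq : ℂ × ℂ => ‖pq.1 - pq.2‖)
        (Finset.mk_mem_product ha hb)
    calc m = ‖q₁ - q₂‖ := hqm
      _ = ‖u‖ * ‖a - b‖ := by
          rw [← hae, ← hbe, ← norm_mul]; congr 1; dsimp; ring
      _ ≤ ‖u‖ * m :=
          mul_le_mul_of_nonneg_left hab (norm_nonneg _)
  nlinarith [hle1, hge1, hm_pos]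

lemma fiber_ncard {P : Finset ℂ} (hP : 2 ≤ P.card) {z₀ w₀ : ℂ} (hz₀ : z₀ ≠ 0) :
    {zw : ℂ × ℂ | zw.1 ≠ 0 ∧
      (fun p => zw.1 * p + zw.2) '' (P : Set ℂ) = (fun p => z₀ * p + w₀) '' (P : Set ℂ)}.ncard
      = IsoPlusCard P := by
  set S := {uw : ℂ × ℂ | ‖uw.1‖ = 1 ∧
    (fun p => uw.1 * p + uw.2) '' (P : Set ℂ) = (P : Set ℂ)} with hS
  have hginj : Function.Injective (fun q : ℂ => z₀ * q + w₀) := by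
    intro a b hab
    simpa [hz₀] using hab
  have key : {zw : ℂ × ℂ | zw.1 ≠ 0 ∧
      (fun p => zw.1 * p + zw.2) '' (P : Set ℂ) = (fun p => z₀ * p + w₀) '' (P : Set ℂ)} =
      (fun uv : ℂ × ℂ => (z₀ * uv.1, z₀ * uv.2 + w₀)) '' S := by
    ext ⟨z, w⟩
    constructor
    · rintro ⟨hz, himg⟩
      have hmaps : (fun p => z / z₀ * p + (w - w₀) / z₀) '' (P : Set ℂ) = (P : Set ℂ) := by
        apply hginj.image_injective (f := fun q : ℂ => z₀ * q + w₀)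
        rw [Set.image_image]
        have hfun : (fun p => z₀ * (z / z₀ * p + (w - w₀) / z₀) + w₀)
            = (fun p => z * p + w) := by
          funext p; field_simp; ring
        rw [hfun, himg]
      exact ⟨(z / z₀, (w - w₀) / z₀),
        ⟨abs_eq_one_of_maps hP (div_ne_zero hz hz₀) hmaps, hmaps⟩, by field_simp; simp⟩
    · rintro ⟨⟨u, v⟩, ⟨habs, himg⟩, heq⟩
      simp only [Prod.mk.injEq] at heq
      have hu : u ≠ 0 := by
        intro h0; rw [h0] at habs; simp at habs
      refine ⟨?_, ?_⟩
      · rw [← heq.1]; exact mul_ne_zero hz₀ hu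
      · rw [← heq.1, ← heq.2]
        have hfun : (fun p : ℂ => z₀ * u * p + (z₀ * v + w₀))
            = (fun q : ℂ => z₀ * q + w₀) ∘ (fun p => u * p + v) := by
          funext p; simp only [Function.comp_apply]; ring
        rw [hfun, Set.image_comp, himg]
  rw [key, Set.ncard_image_of_injective]
  · rfl
  · rintro ⟨a, b⟩ ⟨c, d⟩ hcd
    simp only [Prod.mk.injEq] at hcd
    have h1 : a = c := by
      have := hcd.1; field_simp [hz₀] at this; exact this
    have h2 : b = d := by
      have := hcd.2
      have : z₀ * b = z₀ * d := by linear_combination this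
      field_simp [hz₀] at this; exact this
    simp [h1, h2]


lemma card_Mset (P Q : Finset ℂ) (hP : 2 ≤ P.card) :
    (Mset P Q).ncard = IsoPlusCard P * SP P Q + Q.card := by
  classical
  obtain ⟨p₁, hp₁, p₂, hp₂, hne⟩ := Finset.one_lt_card.mp hP
  have hfin := mset_finite Q hP (P := P)
  rw [Set.ncard_eq_toFinset_card _ hfin]
  set M := hfin.toFinset with hM
  have hmem : ∀ x : ℂ × ℂ, x ∈ M ↔ ∀ p ∈ P, x.1 * p + x.2 ∈ Q := by
    intro x; rw [hM, Set.Finite.mem_toFinset]; rfl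
  have hsplit := Finset.card_filter_add_card_filter_not
    (s := M) (p := fun x : ℂ × ℂ => x.1 = 0)
  -- the zero part has Q.card elements
  have h0 : M.filter (fun x : ℂ × ℂ => x.1 = 0) = Q.image (fun w => ((0 : ℂ), w)) := by
    ext ⟨z, w⟩
    simp only [Finset.mem_filter, hmem, Finset.mem_image, Prod.mk.injEq]
    constructor
    · rintro ⟨hmem', hz⟩
      exact ⟨w, by simpa [hz] using hmem' p₁ hp₁, hz.symm, rfl⟩
    · rintro ⟨w', hw', hz, hw⟩
      exact ⟨fun p hp => by simp [← hz, ← hw, hw'], hz.symm⟩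
  have h0card : (M.filter (fun x : ℂ × ℂ => x.1 = 0)).card = Q.card := by
    rw [h0]
    exact Finset.card_image_of_injective Q (fun a b h => by
      simpa using h)
  -- the nonzero part
  set T := Q.powerset.filter (SimilarC P) with hT
  have hSP : SP P Q = T.card := by
    rw [hT, SP]
  have hfib : (M.filter fun x : ℂ × ℂ => ¬ x.1 = 0).card
      = ∑ P' ∈ T, ((M.filter fun x : ℂ × ℂ => ¬ x.1 = 0).filter
          (fun x => P.image (fun p => x.1 * p + x.2) = P')).card := by
    apply Finset.card_eq_sum_card_fiberwise
    rintro ⟨z, w⟩ hx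
    rw [Finset.mem_coe, Finset.mem_filter, hmem] at hx
    rw [Finset.mem_coe, hT, Finset.mem_filter, Finset.mem_powerset]
    constructor
    · intro q hq
      rw [Finset.mem_image] at hq
      obtain ⟨p, hp, hpq⟩ := hq
      exact hpq ▸ hx.1 p hp
    · exact ⟨z, w, hx.2, by rw [Finset.coe_image]⟩
  have hfibcard : ∀ P' ∈ T, ((M.filter fun x : ℂ × ℂ => ¬ x.1 = 0).filter
      (fun x => P.image (fun p => x.1 * p + x.2) = P')).card = IsoPlusCard P := by
    intro P' hP'
    rw [hT, Finset.mem_filter, Finset.mem_powerset] at hP'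
    obtain ⟨hsub, z₀, w₀, hz₀, hPc⟩ := hP'
    rw [← fiber_ncard hP hz₀ (w₀ := w₀), ← Set.ncard_coe_finset]
    congr 1
    ext ⟨z, w⟩
    simp only [Finset.coe_filter, Finset.mem_filter, hmem, Set.mem_setOf_eq]
    constructor
    · rintro ⟨⟨_, hz⟩, himg⟩
      refine ⟨hz, ?_⟩
      rw [← hPc, ← himg, Finset.coe_image]
    · rintro ⟨hz, himg⟩
      have himg' : P.image (fun p => z * p + w) = P' := by
        rw [← Finset.coe_inj, Finset.coe_image, himg, hPc]
      refine ⟨⟨?_, hz⟩, himg'⟩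
      intro p hp
      have : z * p + w ∈ P.image (fun p => z * p + w) :=
        Finset.mem_image_of_mem _ hp
      rw [himg'] at this
      exact hsub this
  have hsum : (M.filter fun x : ℂ × ℂ => ¬ x.1 = 0).card = T.card * IsoPlusCard P := by
    rw [hfib, Finset.sum_congr rfl hfibcard, Finset.sum_const, smul_eq_mul]
  rw [← hsplit, h0card, hsum, hSP]
  ring

/-- Lemma on Minkowski sums: if `B + C` has exactly `|B|·|C|` points, then
`I·S_P(B + C) + |B|·|C| ≥ (I·S_P(B) + |B|)·(I·S_P(C) + |C|)`. -/
theorem stmt1 (P B C : Finset ℂ) (hP : 2 ≤ P.card)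
    (hB : B.Nonempty) (hC : C.Nonempty)
    (hcard : (minkSum B C).card = B.card * C.card) :
    (IsoPlusCard P * SP P B + B.card) * (IsoPlusCard P * SP P C + C.card) ≤
      IsoPlusCard P * SP P (minkSum B C) + B.card * C.card := by
  classical
  obtain ⟨p₁, hp₁, p₂, hp₂, hne⟩ := Finset.one_lt_card.mp hP
  have h1 := card_Mset P B hP
  have h2 := card_Mset P C hP
  have h3 := card_Mset P (minkSum B C) hP
  rw [← h1, ← h2, ← hcard, ← h3]
  have hfB := mset_finite B hP (P := P)
  have hfC := mset_finite C hP (P := P)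
  have hfBC := mset_finite (minkSum B C) hP (P := P)
  rw [Set.ncard_eq_toFinset_card _ hfB, Set.ncard_eq_toFinset_card _ hfC,
    Set.ncard_eq_toFinset_card _ hfBC, ← Finset.card_product]
  have hadd : Set.InjOn (fun p : ℂ × ℂ => p.1 + p.2) ((B : Set ℂ) ×ˢ (C : Set ℂ)) := by
    have := hcard
    unfold minkSum at this
    exact Finset.card_image₂_iff.mp this
  apply Finset.card_le_card_of_injOn (fun x => (x.1.1 + x.2.1, x.1.2 + x.2.2))
  · rintro ⟨⟨z1, w1⟩, ⟨z2, w2⟩⟩ hx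
    rw [Finset.mem_coe, Finset.mem_product, Set.Finite.mem_toFinset, Set.Finite.mem_toFinset] at hx
    rw [Finset.mem_coe, Set.Finite.mem_toFinset]
    intro p hp
    have : (z1 + z2) * p + (w1 + w2) = (z1 * p + w1) + (z2 * p + w2) := by ring
    rw [this]
    unfold minkSum
    exact Finset.mem_image₂_of_mem (hx.1 p hp) (hx.2 p hp)
  · rintro ⟨⟨z1, w1⟩, ⟨z2, w2⟩⟩ hx ⟨⟨z1', w1'⟩, ⟨z2', w2'⟩⟩ hy heq
    rw [Finset.coe_product, Set.mem_prod, Set.Finite.coe_toFinset,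
      Set.Finite.coe_toFinset] at hx hy
    simp only [Prod.mk.injEq] at heq
    have key : ∀ p ∈ P, z1 * p + w1 = z1' * p + w1' ∧ z2 * p + w2 = z2' * p + w2' := by
      intro p hp
      have hsum : (z1 * p + w1) + (z2 * p + w2) = (z1' * p + w1') + (z2' * p + w2') := by
        linear_combination p * heq.1 + heq.2
      have hmem1 : ((z1 * p + w1, z2 * p + w2) : ℂ × ℂ) ∈ (B : Set ℂ) ×ˢ (C : Set ℂ) :=
        ⟨hx.1 p hp, hx.2 p hp⟩
      have hmem2 : ((z1' * p + w1', z2' * p + w2') : ℂ × ℂ) ∈ (B : Set ℂ) ×ˢ (C : Set ℂ) :=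
        ⟨hy.1 p hp, hy.2 p hp⟩
      have := hadd hmem1 hmem2 hsum
      exact ⟨congrArg Prod.fst this, congrArg Prod.snd this⟩
    obtain ⟨ha1, hb1⟩ := affine_eq hne (key p₁ hp₁).1 (key p₂ hp₂).1
    obtain ⟨ha2, hb2⟩ := affine_eq hne (key p₁ hp₁).2 (key p₂ hp₂).2
    simp [Prod.ext_iff, ha1, hb1, ha2, hb2]
end
end

section
/- Let △ = {1, ω, ω²} ⊆ ℂ, where ω = e^{2πi/3}. There exists a finite set A ⊆ ℂ with exactly 15 points, no 3 of which are collinear, such that S_△(A) ≥ 29. -/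
open MeasureTheory

noncomputable section

namespace Stmt10Aux

/-- omega facts -/
lemma omega3_im_eq : omega3.im = Real.sin (2 * Real.pi / 3) := by
  have h : (2 * (Real.pi : ℂ) * Complex.I / 3) = ((2 * Real.pi / 3 : ℝ) : ℂ) * Complex.I := by
    push_cast; ring
  rw [omega3, h, Complex.exp_ofReal_mul_I_im]

lemma omega3_im_ne : omega3.im ≠ 0 := by
  rw [omega3_im_eq]
  have : 0 < Real.sin (2 * Real.pi / 3) := by
    apply Real.sin_pos_of_pos_of_lt_pi <;> nlinarith [Real.pi_gt_three]
  exact ne_of_gt this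

lemma omega3_cube : omega3 ^ 3 = 1 := by
  have h := Complex.exp_nat_mul (2 * (Real.pi : ℂ) * Complex.I / 3) 3
  rw [omega3, ← h,
    show ((3 : ℕ) : ℂ) * (2 * (Real.pi : ℂ) * Complex.I / 3) = 2 * (Real.pi : ℂ) * Complex.I by
      push_cast; ring]
  exact Complex.exp_two_pi_mul_I

lemma omega3_ne_one : omega3 ≠ 1 := by
  intro h
  apply omega3_im_ne
  rw [h, Complex.one_im]

lemma homega : omega3 ^ 2 + omega3 + 1 = 0 := by
  have h : (omega3 - 1) * (omega3 ^ 2 + omega3 + 1) = 0 := by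
    linear_combination omega3_cube
  rcases mul_eq_zero.mp h with h' | h'
  · exact absurd (sub_eq_zero.mp h') omega3_ne_one
  · exact h'

lemma indepR (u v : ℝ) (h : (u : ℂ) + (v : ℂ) * omega3 = 0) : u = 0 ∧ v = 0 := by
  have him := congrArg Complex.im h
  simp only [Complex.add_im, Complex.ofReal_im, Complex.mul_im, Complex.ofReal_re,
    Complex.zero_im, zero_add, zero_mul, add_zero, mul_zero] at him
  have hv : v = 0 := by
    rcases mul_eq_zero.mp him with h' | h'
    · exact h'
    · exact absurd h' omega3_im_ne
  subst hv
  constructor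
  · have := h
    simp only [Complex.ofReal_zero, zero_mul, add_zero] at this
    exact_mod_cast this
  · rfl

lemma indepZ (u v : ℤ) (h : (u : ℂ) + (v : ℂ) * omega3 = 0) : u = 0 ∧ v = 0 := by
  have h' : ((u : ℝ) : ℂ) + ((v : ℝ) : ℂ) * omega3 = 0 := by exact_mod_cast h
  obtain ⟨hu, hv⟩ := indepR _ _ h'
  exact ⟨by exact_mod_cast hu, by exact_mod_cast hv⟩

/-- Embedding of the triangular lattice. -/
def e (p : ℤ × ℤ) : ℂ := (p.1 : ℂ) + (p.2 : ℂ) * omega3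

lemma e_sub (p q : ℤ × ℤ) :
    e q - e p = ((q.1 - p.1 : ℤ) : ℂ) + ((q.2 - p.2 : ℤ) : ℂ) * omega3 := by
  simp only [e]; push_cast; ring

lemma e_inj : Function.Injective e := by
  intro p q h
  have h0 : ((p.1 - q.1 : ℤ) : ℂ) + ((p.2 - q.2 : ℤ) : ℂ) * omega3 = 0 := by
    rw [← e_sub q p, h, sub_self]
  obtain ⟨h1, h2⟩ := indepZ _ _ h0
  have : p.1 = q.1 := by omega
  have : p.2 = q.2 := by omega
  exact Prod.ext (by omega) (by omega)

def cross (u v : ℤ × ℤ) : ℤ := u.1 * v.2 - u.2 * v.1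

lemma ncol (p q r : ℤ × ℤ) (h : cross (q - p) (r - p) ≠ 0) :
    ¬ Collinear ℝ ({e p, e q, e r} : Set ℂ) := by
  intro hc
  rw [collinear_iff_of_mem (Set.mem_insert (e p) _)] at hc
  obtain ⟨v, hv⟩ := hc
  obtain ⟨t1, ht1⟩ := hv (e q) (by simp)
  obtain ⟨t2, ht2⟩ := hv (e r) (by simp)
  have hq : e q - e p = (t1 : ℂ) * v := by
    rw [ht1]; simp [Complex.real_smul]
  have hr : e r - e p = (t2 : ℂ) * v := by
    rw [ht2]; simp [Complex.real_smul]
  set a1 : ℤ := q.1 - p.1 with ha1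
  set b1 : ℤ := q.2 - p.2 with hb1
  set a2 : ℤ := r.1 - p.1 with ha2
  set b2 : ℤ := r.2 - p.2 with hb2
  have hcross : a1 * b2 - b1 * a2 ≠ 0 := by
    simpa [cross, ha1, hb1, ha2, hb2, Prod.sub_def] using h
  have key : (t2 : ℂ) * ((a1 : ℂ) + (b1 : ℂ) * omega3)
      = (t1 : ℂ) * ((a2 : ℂ) + (b2 : ℂ) * omega3) := by
    rw [← e_sub, ← e_sub, hq, hr]; ring
  have h2 : ((t2 * a1 - t1 * a2 : ℝ) : ℂ) + ((t2 * b1 - t1 * b2 : ℝ) : ℂ) * omega3 = 0 := by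
    push_cast
    linear_combination key
  obtain ⟨hA, hB⟩ := indepR _ _ h2
  have hA' : t2 * (a1 : ℝ) = t1 * (a2 : ℝ) := by linarith
  have hB' : t2 * (b1 : ℝ) = t1 * (b2 : ℝ) := by linarith
  have hcR : ((a1 * b2 - b1 * a2 : ℤ) : ℝ) ≠ 0 := Int.cast_ne_zero.mpr hcross
  push_cast at hcR
  have ht2z : t2 = 0 := by
    have h5 : t2 * ((a1 : ℝ) * b2 - (b1 : ℝ) * a2) = 0 := by
      linear_combination (b2 : ℝ) * hA' - (a2 : ℝ) * hB'
    rcases mul_eq_zero.mp h5 with h' | h'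
    · exact h'
    · exact absurd h' hcR
  have ht1z : t1 = 0 := by
    have h5 : t1 * ((a1 : ℝ) * b2 - (b1 : ℝ) * a2) = 0 := by
      linear_combination (b1 : ℝ) * hA' - (a1 : ℝ) * hB'
    rcases mul_eq_zero.mp h5 with h' | h'
    · exact h'
    · exact absurd h' hcR
  -- then e q = e p, so a1 = b1 = 0, contradicting hcross
  have hq0 : ((a1 : ℂ)) + (b1 : ℂ) * omega3 = 0 := by
    rw [← e_sub, hq, ht1z]; push_cast; ring
  obtain ⟨h6, h7⟩ := indepZ _ _ hq0
  rw [h6, h7] at hcross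
  simp at hcross

lemma two_plus_omega_ne : (2 : ℂ) + omega3 ≠ 0 := by
  intro h
  have hom : omega3 = -2 := by linear_combination h
  have := homega
  rw [hom] at this
  norm_num at this

/-- key similarity lemma -/
lemma sim (x y : ℂ) (hxy : x ≠ y) :
    SimilarC triEq {x, y, x + (1 + omega3) * (y - x)} := by
  refine ⟨(2 + omega3) * (x - y) / 3,
    ((1 - omega3) * x + (2 + omega3) * y) / 3, ?_, ?_⟩
  · exact div_ne_zero (mul_ne_zero two_plus_omega_ne (sub_ne_zero.mpr hxy)) (by norm_num)
  · have hc : ((({x, y, x + (1 + omega3) * (y - x)} : Finset ℂ)) : Set ℂ)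
        = {x, y, x + (1 + omega3) * (y - x)} := by
      simp
    have ht : ((triEq : Finset ℂ) : Set ℂ) = {1, omega3, omega3 ^ 2} := by
      simp [triEq]
    rw [hc, ht, Set.image_insert_eq, Set.image_insert_eq, Set.image_singleton]
    rw [show (2 + omega3) * (x - y) / 3 * 1 + ((1 - omega3) * x + (2 + omega3) * y) / 3 = x by ring]
    rw [show (2 + omega3) * (x - y) / 3 * omega3 + ((1 - omega3) * x + (2 + omega3) * y) / 3 = y by
      linear_combination ((x - y) / 3) * homega]
    rw [show (2 + omega3) * (x - y) / 3 * omega3 ^ 2 + ((1 - omega3) * x + (2 + omega3) * y) / 3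
        = x + (1 + omega3) * (y - x) by
      linear_combination ((x - y) * (omega3 + 1) / 3) * homega]

/-- the 15-point configuration -/
def Lz : Finset (ℤ × ℤ) :=
  {(-3,-4),(3,1),(2,-1),(1,0),(-2,-2),(-2,2),(-4,-3),(-1,1),(-1,-5),(-3,-1),(4,4),(0,-2),(-5,0),(1,2),(0,3)}

def Aset : Finset ℂ := Lz.image e

def tr (u : (ℤ × ℤ) × (ℤ × ℤ)) : ℤ × ℤ :=
  (u.1.1 + (u.2.1 - u.1.1) - (u.2.2 - u.1.2), u.1.2 + (u.2.1 - u.1.1))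

def Pairs : Finset ((ℤ × ℤ) × (ℤ × ℤ)) :=
  {((-3,-4),(3,1)), ((-3,-4),(2,-1)), ((-3,-4),(-2,-2)), ((-3,-4),(-1,-5)), ((-3,-4),(1,2)),
   ((3,1),(1,0)), ((3,1),(0,3)), ((3,1),(-3,-1)), ((3,1),(4,4)), ((2,-1),(1,0)),
   ((2,-1),(-2,-2)), ((2,-1),(1,2)), ((2,-1),(0,3)), ((2,-1),(4,4)), ((1,0),(-1,1)),
   ((1,0),(-2,2)), ((1,0),(-4,-3)), ((1,0),(0,3)), ((1,0),(4,4)), ((-2,-2),(-3,-1)),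
   ((-2,-2),(0,3)), ((-2,2),(-1,1)), ((-2,2),(-5,0)), ((-2,2),(0,-2)), ((-4,-3),(0,-2)),
   ((-4,-3),(-1,1)), ((-1,1),(1,2)), ((-1,-5),(4,4)), ((-3,-1),(0,-2))}

def Tz : Finset (Finset (ℤ × ℤ)) := Pairs.image (fun u => {u.1, u.2, tr u})

lemma hTz : Tz.card = 29 := by decide

lemma hgood : ∀ u ∈ Pairs, u.1 ∈ Lz ∧ u.2 ∈ Lz ∧ tr u ∈ Lz ∧ u.1 ≠ u.2 := by decide

lemma hnc : ∀ p ∈ Lz, ∀ q ∈ Lz, ∀ r ∈ Lz,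
    p ≠ q → p ≠ r → q ≠ r → cross (q - p) (r - p) ≠ 0 := by decide

lemma e_tr (u : (ℤ × ℤ) × (ℤ × ℤ)) :
    e (tr u) = e u.1 + (1 + omega3) * (e u.2 - e u.1) := by
  simp only [e, tr]
  push_cast
  linear_combination ((u.1.2 : ℂ) - (u.2.2 : ℂ)) * homega

lemma Lz_card : Lz.card = 15 := by decide

end Stmt10Aux

/-- There is a 15-point set in general position containing at least 29 equilateral
triangles `{1, ω, ω²}` up to similarity. -/
theorem stmt10 :
    ∃ A : Finset ℂ, A.card = 15 ∧ (∀ S ⊆ A, Collinear ℝ (S : Set ℂ) → S.card ≤ 2) ∧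
      29 ≤ SP triEq A := by
  classical
  refine ⟨Stmt10Aux.Aset, ?_, ?_, ?_⟩
  · rw [Stmt10Aux.Aset, Finset.card_image_of_injective _ Stmt10Aux.e_inj, Stmt10Aux.Lz_card]
  · intro S hS hcol
    by_contra hc
    push_neg at hc
    obtain ⟨x, y, z, hxS, hyS, hzS, hxy, hxz, hyz⟩ := Finset.two_lt_card_iff.mp hc
    obtain ⟨p, hp, rfl⟩ := Finset.mem_image.mp (hS hxS)
    obtain ⟨q, hq, rfl⟩ := Finset.mem_image.mp (hS hyS)
    obtain ⟨r, hr, rfl⟩ := Finset.mem_image.mp (hS hzS)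
    have hpq : p ≠ q := fun h => hxy (congrArg Stmt10Aux.e h)
    have hpr : p ≠ r := fun h => hxz (congrArg Stmt10Aux.e h)
    have hqr : q ≠ r := fun h => hyz (congrArg Stmt10Aux.e h)
    apply Stmt10Aux.ncol p q r (Stmt10Aux.hnc p hp q hq r hr hpq hpr hqr)
    apply hcol.subset
    intro w hw
    rcases hw with h | h | h
    · subst h; exact Finset.mem_coe.mpr hxS
    · subst h; exact Finset.mem_coe.mpr hyS
    · rw [Set.mem_singleton_iff] at h; subst h; exact Finset.mem_coe.mpr hzS
  · unfold SP
    have hTcard : (Stmt10Aux.Tz.image (Finset.image Stmt10Aux.e)).card = 29 := by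
      rw [Finset.card_image_of_injective _ (Finset.image_injective Stmt10Aux.e_inj)]
      exact Stmt10Aux.hTz
    refine le_trans (le_of_eq hTcard.symm) (Finset.card_le_card ?_)
    intro s hs
    simp only [Finset.mem_image] at hs
    obtain ⟨t, ht, rfl⟩ := hs
    rw [Stmt10Aux.Tz, Finset.mem_image] at ht
    obtain ⟨u, hu, rfl⟩ := ht
    obtain ⟨h1, h2, h3, hne⟩ := Stmt10Aux.hgood u hu
    rw [Finset.mem_filter, Finset.mem_powerset]
    constructor
    · refine Finset.image_subset_image ?_
      simp [Finset.insert_subset_iff, h1, h2, h3]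
    · have himg : Finset.image Stmt10Aux.e {u.1, u.2, Stmt10Aux.tr u}
          = {Stmt10Aux.e u.1, Stmt10Aux.e u.2, Stmt10Aux.e (Stmt10Aux.tr u)} := by
        simp [Finset.image_insert]
      rw [himg, Stmt10Aux.e_tr]
      exact Stmt10Aux.sim _ _ (fun h => hne (Stmt10Aux.e_inj h))
end
end
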